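/- arXiv:1702.07261 — 2 statements merged into one kernel-verified Lean document; each statement's English description precedes it below -/
import Mathlib

section
/- An element x ∈ R̂ has a multiplicative inverse (with respect to ⋆) if and only if x is not infinitesimal; in that case its inverse is the sequence n ↦ 1/(lim x) − (x_n − lim x)/(lim x)², which is itself convergent. -/
open Filter Topology

def Converges (x : ℕ → ℝ) : Prop := ∃ l : ℝ, Filter.Tendsto x Filter.atTop (nhds l)

def Rhat : Type := {x : ℕ → ℝ // Converges x}

noncomputable def slim (x : Rhat) : ℝ := limUnder atTop x.1

theorem slim_tendsto (x : Rhat) : Tendsto x.1 atTop (nhds (slim x)) := by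
  obtain ⟨l, hl⟩ := x.2
  rw [show slim x = l from hl.limUnder_eq]
  exact hl

noncomputable def hadd (x y : Rhat) : Rhat :=
  ⟨fun n => x.1 n + y.1 n, ⟨slim x + slim y, (slim_tendsto x).add (slim_tendsto y)⟩⟩

noncomputable def hmul (x y : Rhat) : Rhat :=
  ⟨fun n => slim x * y.1 n + slim y * x.1 n - slim x * slim y,
   ⟨slim x * slim y + slim y * slim x - slim x * slim y,
    (((slim_tendsto y).const_mul (slim x)).add
      ((slim_tendsto x).const_mul (slim y))).sub tendsto_const_nhds⟩⟩

def const (ξ : ℝ) : Rhat := ⟨fun _ => ξ, ⟨ξ, tendsto_const_nhds⟩⟩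

noncomputable def shadow (x : Rhat) : Rhat := const (slim x)

noncomputable def dd (x : Rhat) : Rhat :=
  ⟨fun n => x.1 n - slim x, ⟨0, by
    simpa using (slim_tendsto x).sub (tendsto_const_nhds (x := slim x))⟩⟩

theorem slim_hadd (x y : Rhat) : slim (hadd x y) = slim x + slim y :=
  Filter.Tendsto.limUnder_eq ((slim_tendsto x).add (slim_tendsto y))

theorem slim_hmul (x y : Rhat) : slim (hmul x y) = slim x * slim y := by
  have h : Tendsto (hmul x y).1 atTop
      (nhds (slim x * slim y + slim y * slim x - slim x * slim y)) :=
    (((slim_tendsto y).const_mul (slim x)).add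
      ((slim_tendsto x).const_mul (slim y))).sub tendsto_const_nhds
  have h2 : slim x * slim y + slim y * slim x - slim x * slim y = slim x * slim y := by ring
  rw [h2] at h
  exact h.limUnder_eq

noncomputable def hpow (x : Rhat) : ℕ → Rhat
  | 0 => const 1
  | n + 1 => hmul (hpow x n) x


theorem slim_ne_zero_iff (x : Rhat) : ¬ Tendsto x.1 atTop (nhds 0) ↔ slim x ≠ 0 := by
  constructor
  · intro h hl
    exact h (hl ▸ slim_tendsto x)
  · intro hl h
    exact hl (tendsto_nhds_unique (slim_tendsto x) h)

theorem slim_const (ξ : ℝ) : slim (const ξ) = ξ :=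
  Filter.Tendsto.limUnder_eq tendsto_const_nhds

theorem inv_conv (x : Rhat) :
    Converges (fun n => 1 / slim x - (x.1 n - slim x) / (slim x) ^ 2) := by
  refine ⟨1 / slim x - (slim x - slim x) / (slim x) ^ 2, ?_⟩
  exact tendsto_const_nhds.sub (((slim_tendsto x).sub tendsto_const_nhds).div_const _)

theorem slim_inv (x : Rhat) :
    slim (⟨fun n => 1 / slim x - (x.1 n - slim x) / (slim x) ^ 2, inv_conv x⟩ : Rhat)
      = 1 / slim x := by
  have h : Tendsto (fun n => 1 / slim x - (x.1 n - slim x) / (slim x) ^ 2) atTop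
      (nhds (1 / slim x - (slim x - slim x) / (slim x) ^ 2)) :=
    tendsto_const_nhds.sub (((slim_tendsto x).sub tendsto_const_nhds).div_const _)
  show limUnder atTop (fun n => 1 / slim x - (x.1 n - slim x) / (slim x) ^ 2) = 1 / slim x
  simpa using h.limUnder_eq

/-- x ∈ R̂ is invertible for ⋆ iff it is not infinitesimal, and in that case
the inverse is the (convergent) sequence n ↦ 1/(lim x) − (x_n − lim x)/(lim x)². -/
theorem invertible_iff_not_infinitesimal (x : Rhat) :
    ((∃ y : Rhat, hmul x y = const 1) ↔ ¬ Tendsto x.1 atTop (nhds 0)) ∧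
    (¬ Tendsto x.1 atTop (nhds 0) →
      ∃ h : Converges (fun n => 1 / slim x - (x.1 n - slim x) / (slim x) ^ 2),
        hmul x ⟨fun n => 1 / slim x - (x.1 n - slim x) / (slim x) ^ 2, h⟩ = const 1) := by
  have key : ¬ Tendsto x.1 atTop (nhds 0) →
      ∃ h : Converges (fun n => 1 / slim x - (x.1 n - slim x) / (slim x) ^ 2),
        hmul x ⟨fun n => 1 / slim x - (x.1 n - slim x) / (slim x) ^ 2, h⟩ = const 1 := by
    intro hx
    have hL : slim x ≠ 0 := (slim_ne_zero_iff x).1 hx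
    refine ⟨inv_conv x, ?_⟩
    apply Subtype.ext
    funext n
    show slim x * _ + slim _ * x.1 n - slim x * slim _ = 1
    rw [slim_inv]
    field_simp
    ring
  refine ⟨⟨?_, fun hx => (key hx).elim fun h hy => ⟨_, hy⟩⟩, key⟩
  rintro ⟨y, hy⟩
  rw [slim_ne_zero_iff]
  intro hL
  have := congrArg slim hy
  rw [slim_hmul, slim_const, hL] at this
  simp at this
end

section
/- The set m(0) of infinitesimals (real sequences converging to 0) is a nonzero ideal of the ring R̂ of convergent real sequences. -/
open Filter Topology

def infinitesimals : Set Rhat := {x : Rhat | Tendsto x.1 atTop (nhds 0)}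

/-- the set of infinitesimals is a nonzero ideal of R̂. -/
theorem infinitesimals_nonzero_ideal :
    const 0 ∈ infinitesimals ∧
    (∃ x ∈ infinitesimals, x ≠ const 0) ∧
    (∀ x ∈ infinitesimals, ∀ y ∈ infinitesimals, hadd x y ∈ infinitesimals) ∧
    (∀ x ∈ infinitesimals, ∃ y ∈ infinitesimals, hadd x y = const 0) ∧
    (∀ r : Rhat, ∀ x ∈ infinitesimals, hmul r x ∈ infinitesimals) := by
  have slim_zero : ∀ x ∈ infinitesimals, slim x = 0 := fun x hx => hx.limUnder_eq
  refine ⟨tendsto_const_nhds, ?_, ?_, ?_, ?_⟩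
  · refine ⟨⟨fun n => 1 / (n + 1), ⟨0, tendsto_one_div_add_atTop_nhds_zero_nat⟩⟩,
      tendsto_one_div_add_atTop_nhds_zero_nat, ?_⟩
    intro h
    have := congrArg (fun z : Rhat => z.1 0) h
    simp [const] at this
  · intro x hx y hy
    exact (show Tendsto (fun n => x.1 n + y.1 n) atTop (nhds 0) by simpa using hx.add hy)
  · intro x hx
    refine ⟨⟨fun n => -x.1 n, ⟨0, by simpa using hx.neg⟩⟩, show Tendsto (fun n => -x.1 n) atTop (nhds 0) by simpa using hx.neg, ?_⟩
    apply Subtype.ext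
    funext n
    simp [hadd, const]
  · intro r x hx
    have hs : slim x = 0 := slim_zero x hx
    have : Tendsto (fun n => slim r * x.1 n + slim x * r.1 n - slim r * slim x)
        atTop (nhds 0) := by
      rw [hs]
      simpa using (hx.const_mul (slim r))
    exact this
end
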